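/- Let 𝒞 be a finitely complete majority category and A an object of 𝒞. Writing π₁, π₂, π₃ : A × A × A → A for the product projections, the three morphisms ⟨π₁, π₁, π₃⟩, ⟨π₁, π₂, π₂⟩, ⟨π₃, π₂, π₃⟩ : A × A × A → A × A × A are jointly strongly epimorphic; in particular, every monomorphism r : R → A × A × A through which all three of these morphisms factor is an isomorphism. -/

import Mathlib

open CategoryTheory CategoryTheory.Limits

/-- The triple of morphisms `(a, b, c)` is related by the ternary relation
`(r₁, r₂, r₃)`. -/
def TernaryRelated {C : Type*} [Category C] {R A B D S : C}
    (r₁ : R ⟶ A) (r₂ : R ⟶ B) (r₃ : R ⟶ D) (a : S ⟶ A) (b : S ⟶ B) (c : S ⟶ D) : Prop :=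
  ∃ f : S ⟶ R, f ≫ r₁ = a ∧ f ≫ r₂ = b ∧ f ≫ r₃ = c

/-- A category is a majority category when every (jointly monomorphic) internal ternary
relation is strictly closed with respect to the majority matrix. -/
def IsMajorityCategory (C : Type*) [Category C] : Prop :=
  ∀ ⦃A B D R : C⦄ (r₁ : R ⟶ A) (r₂ : R ⟶ B) (r₃ : R ⟶ D),
    (∀ ⦃S : C⦄ (f g : S ⟶ R),
      f ≫ r₁ = g ≫ r₁ → f ≫ r₂ = g ≫ r₂ → f ≫ r₃ = g ≫ r₃ → f = g) →
    ∀ ⦃S : C⦄ (a₁ a₂ : S ⟶ A) (b₁ b₂ : S ⟶ B) (c₁ c₂ : S ⟶ D),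
      TernaryRelated r₁ r₂ r₃ a₁ b₁ c₂ →
      TernaryRelated r₁ r₂ r₃ a₁ b₂ c₁ →
      TernaryRelated r₁ r₂ r₃ a₂ b₁ c₁ →
      TernaryRelated r₁ r₂ r₃ a₁ b₁ c₁

section
variable {C : Type*} [Category C] [HasBinaryProducts C]

/-- The first projection `A ⨯ A ⨯ A ⟶ A`. -/
noncomputable def proj₁ (A : C) : A ⨯ (A ⨯ A) ⟶ A := prod.fst
/-- The second projection `A ⨯ A ⨯ A ⟶ A`. -/
noncomputable def proj₂ (A : C) : A ⨯ (A ⨯ A) ⟶ A := prod.snd ≫ prod.fst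
/-- The third projection `A ⨯ A ⨯ A ⟶ A`. -/
noncomputable def proj₃ (A : C) : A ⨯ (A ⨯ A) ⟶ A := prod.snd ≫ prod.snd

/-- The morphism `⟨π₁, π₁, π₃⟩ : A ⨯ A ⨯ A ⟶ A ⨯ A ⨯ A`. -/
noncomputable def m₁ (A : C) : A ⨯ (A ⨯ A) ⟶ A ⨯ (A ⨯ A) :=
  prod.lift (proj₁ A) (prod.lift (proj₁ A) (proj₃ A))
/-- The morphism `⟨π₁, π₂, π₂⟩ : A ⨯ A ⨯ A ⟶ A ⨯ A ⨯ A`. -/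
noncomputable def m₂ (A : C) : A ⨯ (A ⨯ A) ⟶ A ⨯ (A ⨯ A) :=
  prod.lift (proj₁ A) (prod.lift (proj₂ A) (proj₂ A))
/-- The morphism `⟨π₃, π₂, π₃⟩ : A ⨯ A ⨯ A ⟶ A ⨯ A ⨯ A`. -/
noncomputable def m₃ (A : C) : A ⨯ (A ⨯ A) ⟶ A ⨯ (A ⨯ A) :=
  prod.lift (proj₃ A) (prod.lift (proj₂ A) (proj₃ A))

end


lemma key_split {C : Type*} [Category C] [HasFiniteLimits C]
    (hmaj : IsMajorityCategory C) (A : C) {R : C} (r : R ⟶ A ⨯ (A ⨯ A)) (hr : Mono r)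
    (h1 : ∃ f₁ : A ⨯ (A ⨯ A) ⟶ R, f₁ ≫ r = m₁ A)
    (h2 : ∃ f₂ : A ⨯ (A ⨯ A) ⟶ R, f₂ ≫ r = m₂ A)
    (h3 : ∃ f₃ : A ⨯ (A ⨯ A) ⟶ R, f₃ ≫ r = m₃ A) :
    ∃ s : A ⨯ (A ⨯ A) ⟶ R, s ≫ r = 𝟙 _ := by
  obtain ⟨f₁, hf₁⟩ := h1
  obtain ⟨f₂, hf₂⟩ := h2
  obtain ⟨f₃, hf₃⟩ := h3
  have jm : ∀ ⦃S : C⦄ (f g : S ⟶ R),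
      f ≫ (r ≫ proj₁ A) = g ≫ (r ≫ proj₁ A) →
      f ≫ (r ≫ proj₂ A) = g ≫ (r ≫ proj₂ A) →
      f ≫ (r ≫ proj₃ A) = g ≫ (r ≫ proj₃ A) → f = g := by
    intro S f g h1 h2 h3
    have : f ≫ r = g ≫ r := by
      apply Limits.prod.hom_ext
      · simpa [proj₁] using h1
      · apply Limits.prod.hom_ext
        · simpa [proj₂] using h2
        · simpa [proj₃] using h3
    exact (cancel_mono r).mp this
  have t1 : TernaryRelated (r ≫ proj₁ A) (r ≫ proj₂ A) (r ≫ proj₃ A)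
      (proj₁ A) (proj₂ A) (proj₂ A) :=
    ⟨f₂, by simp only [reassoc_of% hf₂, m₂, proj₁, proj₂, proj₃]; exact ⟨prod.lift_fst _ _, by erw [prod.lift_snd_assoc, prod.lift_fst], by erw [prod.lift_snd_assoc, prod.lift_snd]⟩⟩
  have t2 : TernaryRelated (r ≫ proj₁ A) (r ≫ proj₂ A) (r ≫ proj₃ A)
      (proj₁ A) (proj₁ A) (proj₃ A) :=
    ⟨f₁, by simp only [reassoc_of% hf₁, m₁, proj₁, proj₂, proj₃]; exact ⟨prod.lift_fst _ _, by erw [prod.lift_snd_assoc, prod.lift_fst], by erw [prod.lift_snd_assoc, prod.lift_snd]⟩⟩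
  have t3 : TernaryRelated (r ≫ proj₁ A) (r ≫ proj₂ A) (r ≫ proj₃ A)
      (proj₃ A) (proj₂ A) (proj₃ A) :=
    ⟨f₃, by simp only [reassoc_of% hf₃, m₃, proj₁, proj₂, proj₃]; exact ⟨prod.lift_fst _ _, by erw [prod.lift_snd_assoc, prod.lift_fst], by erw [prod.lift_snd_assoc, prod.lift_snd]⟩⟩
  obtain ⟨s, hs1, hs2, hs3⟩ :=
    hmaj (r ≫ proj₁ A) (r ≫ proj₂ A) (r ≫ proj₃ A) jm
      (proj₁ A) (proj₃ A) (proj₂ A) (proj₁ A) (proj₃ A) (proj₂ A) t1 t2 t3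
  refine ⟨s, ?_⟩
  apply Limits.prod.hom_ext
  · simpa [proj₁] using hs1
  · apply Limits.prod.hom_ext
    · simpa [proj₂] using hs2
    · simpa [proj₃] using hs3

/-- In a finitely complete majority category, the morphisms `⟨π₁,π₁,π₃⟩`, `⟨π₁,π₂,π₂⟩`,
`⟨π₃,π₂,π₃⟩ : A ⨯ A ⨯ A ⟶ A ⨯ A ⨯ A` are jointly strongly epimorphic; in particular every
monomorphism through which all three factor is an isomorphism. -/
theorem jointly_strongly_epimorphic_triple {C : Type*} [Category C] [HasFiniteLimits C]
    (hmaj : IsMajorityCategory C) (A : C) :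
    (∀ ⦃P Q : C⦄ (m : P ⟶ Q), Mono m →
      ∀ (u₁ u₂ u₃ : A ⨯ (A ⨯ A) ⟶ P) (v : A ⨯ (A ⨯ A) ⟶ Q),
        u₁ ≫ m = m₁ A ≫ v → u₂ ≫ m = m₂ A ≫ v → u₃ ≫ m = m₃ A ≫ v →
        ∃ t : A ⨯ (A ⨯ A) ⟶ P, t ≫ m = v ∧ m₁ A ≫ t = u₁ ∧ m₂ A ≫ t = u₂ ∧ m₃ A ≫ t = u₃)
    ∧
    (∀ ⦃R : C⦄ (r : R ⟶ A ⨯ (A ⨯ A)), Mono r →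
      (∃ f₁ : A ⨯ (A ⨯ A) ⟶ R, f₁ ≫ r = m₁ A) →
      (∃ f₂ : A ⨯ (A ⨯ A) ⟶ R, f₂ ≫ r = m₂ A) →
      (∃ f₃ : A ⨯ (A ⨯ A) ⟶ R, f₃ ≫ r = m₃ A) →
      IsIso r) := by
  constructor
  · intro P Q m hm u₁ u₂ u₃ v h1 h2 h3
    let W := pullback v m
    have hfst : Mono (pullback.fst v m) := by infer_instance
    obtain ⟨s, hs⟩ := key_split hmaj A (pullback.fst v m) hfst
      ⟨pullback.lift (m₁ A) u₁ h1.symm, pullback.lift_fst _ _ _⟩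
      ⟨pullback.lift (m₂ A) u₂ h2.symm, pullback.lift_fst _ _ _⟩
      ⟨pullback.lift (m₃ A) u₃ h3.symm, pullback.lift_fst _ _ _⟩
    refine ⟨s ≫ pullback.snd v m, ?_, ?_, ?_, ?_⟩
    · rw [Category.assoc, ← pullback.condition, ← Category.assoc, hs, Category.id_comp]
    all_goals
      apply (cancel_mono m).mp
      rw [Category.assoc, Category.assoc, ← pullback.condition]
    · simp [reassoc_of% hs, h1]
    · simp [reassoc_of% hs, h2]
    · simp [reassoc_of% hs, h3]
  · intro R r hr h1 h2 h3
    obtain ⟨s, hs⟩ := key_split hmaj A r hr h1 h2 h3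
    have : IsSplitEpi r := ⟨⟨⟨s, hs⟩⟩⟩
    exact isIso_of_mono_of_isSplitEpi r
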